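/- arXiv:2112.00299 — 3 statements merged into one kernel-verified Lean document; each statement's English description precedes it below -/
import Mathlib

section
/- (Proposition 1, correlated T&R phase-shift model.) Let T = β^T·exp(i·φ^T) and R = β^R·exp(i·φ^R) with β^T = √(1 − (β^R)²) and 0 < β^R < 1. Then (|T + R| = 1 or |T − R| = 1) holds if and only if there exist ν ∈ {0,1} and an integer k such that φ^R − φ^T = π/2 + ν·π + 2kπ, i.e., the phase difference between reflection and transmission is π/2 or 3π/2 modulo 2π. -/
open Real Complex

/-- Proposition 1, correlated T&R phase-shift model:
With `T = βT · exp(i φT)`, `R = βR · exp(i φR)`, `βT = √(1 − βR²)` and `0 < βR < 1`,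
`(|T + R| = 1 ∨ |T − R| = 1)` holds iff there exist `ν ∈ {0,1}` and an integer `k` with
`φR − φT = π/2 + ν·π + 2kπ`. -/
theorem stmt_1 (βR βT φT φR : ℝ)
    (hβR : 0 < βR ∧ βR < 1) (hβT : βT = Real.sqrt (1 - βR ^ 2))
    (T R : ℂ)
    (hT : T = (βT : ℂ) * Complex.exp (Complex.I * (φT : ℂ)))
    (hR : R = (βR : ℂ) * Complex.exp (Complex.I * (φR : ℂ))) :
    (‖T + R‖ = 1 ∨ ‖T - R‖ = 1)
      ↔ ∃ (ν : ℕ) (k : ℤ), (ν = 0 ∨ ν = 1) ∧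
          φR - φT = π / 2 + (ν : ℝ) * π + 2 * (k : ℝ) * π := by
  obtain ⟨h0, h1⟩ := hβR
  set Δ : ℝ := φR - φT with hΔ
  have hβR2 : (0:ℝ) < 1 - βR ^ 2 := by nlinarith
  have hβT0 : 0 < βT := by rw [hβT]; positivity
  have hβTsq : βT ^ 2 = 1 - βR ^ 2 := by
    rw [hβT, Real.sq_sqrt hβR2.le]
  -- key: abs (T ± R) squared
  have key : ∀ s : ℝ, (s = 1 ∨ s = -1) →
      ‖T + (s:ℂ) * R‖ ^ 2 = 1 + 2 * s * βT * βR * Real.cos Δ := by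
    intro s hs
    rw [Complex.sq_norm, hT, hR]
    have e1 : Complex.I * (φR:ℂ) = Complex.I * (φT:ℂ) + Complex.I * (Δ:ℂ) := by
      push_cast [hΔ]; ring
    rw [e1, Complex.exp_add]
    have e2 : (βT : ℂ) * Complex.exp (Complex.I * (φT : ℂ)) +
        (s:ℂ) * ((βR : ℂ) * (Complex.exp (Complex.I * (φT : ℂ)) * Complex.exp (Complex.I * (Δ : ℂ)))) =
        Complex.exp (Complex.I * (φT : ℂ)) * ((βT:ℂ) + (s:ℂ) * (βR:ℂ) * Complex.exp (Complex.I * (Δ:ℂ))) := by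
      ring
    rw [e2, Complex.normSq_mul]
    have e3 : Complex.normSq (Complex.exp (Complex.I * (φT : ℂ))) = 1 := by
      rw [Complex.normSq_eq_norm_sq]
      rw [mul_comm, Complex.norm_exp_ofReal_mul_I]
      norm_num
    rw [e3, one_mul]
    have e4 : (βT:ℂ) + (s:ℂ) * (βR:ℂ) * Complex.exp (Complex.I * (Δ:ℂ)) =
        Complex.ofReal (βT + s * βR * Real.cos Δ) + Complex.ofReal (s * βR * Real.sin Δ) * Complex.I := by
      rw [mul_comm Complex.I, Complex.exp_mul_I]
      push_cast
      ring
    rw [e4, Complex.normSq_add_mul_I]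
    rcases hs with rfl | rfl <;> nlinarith [Real.sin_sq_add_cos_sq Δ]
  have keyp := key 1 (Or.inl rfl)
  have keym := key (-1) (Or.inr rfl)
  simp only [Complex.ofReal_one, one_mul] at keyp
  have hm : T + ((-1:ℝ):ℂ) * R = T - R := by push_cast; ring
  rw [hm] at keym
  have habs : ∀ z : ℂ, ‖z‖ = 1 ↔ ‖z‖ ^ 2 = 1 := by
    intro z
    constructor
    · intro h; rw [h]; norm_num
    · intro h
      nlinarith [norm_nonneg z]
  have hcos : (‖T + R‖ = 1 ∨ ‖T - R‖ = 1) ↔ Real.cos Δ = 0 := by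
    rw [habs (T + R), habs (T - R), keyp, keym]
    have hpos : 0 < βT * βR := mul_pos hβT0 h0
    constructor
    · rintro (h | h) <;>
      · have h2 : βT * βR * Real.cos Δ = 0 := by linarith
        rcases mul_eq_zero.mp h2 with h3 | h3
        · exact absurd h3 hpos.ne'
        · exact h3
    · intro h; left; rw [h]; ring
  rw [hcos, Real.cos_eq_zero_iff]
  constructor
  · rintro ⟨n, hn⟩
    refine ⟨(n % 2).toNat, n / 2, ?_, ?_⟩
    · rcases Int.emod_two_eq n with h | h <;> [left; right] <;> rw [h] <;> rfl
    · have hsplit : n = 2 * (n / 2) + n % 2 := (Int.mul_ediv_add_emod n 2).symm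
      have hcast : ((n % 2).toNat : ℝ) = ((n % 2 : ℤ) : ℝ) := by
        rcases Int.emod_two_eq n with h | h <;> rw [h] <;> norm_num
      have hn2 : ((n : ℤ) : ℝ) = 2 * ((n / 2 : ℤ) : ℝ) + ((n % 2 : ℤ) : ℝ) := by
        exact_mod_cast congrArg (fun m : ℤ => (m : ℝ)) hsplit
      rw [hn, hcast]
      linear_combination π * hn2
  · rintro ⟨ν, k, hν, h⟩
    refine ⟨2 * k + ν, ?_⟩
    rcases hν with rfl | rfl <;> · rw [h]; push_cast; ring
end

section
/- (Correctness of the diversity preserving phase-shift configuration, Table I.) Let Δ^R, Δ^T ∈ ℝ with d := Δ^R − Δ^T ∈ (−2π, 2π), and set φ' = (Δ^R + Δ^T)/2. Define (φ^{T*}, φ^{R*}) = (φ' − π/4, φ' + π/4) if d ∈ [0, π); (φ' − 3π/4, φ' + 3π/4) if d ∈ [π, 2π); (φ' + π/4, φ' − π/4) if d ∈ [−π, 0); and (φ' + 3π/4, φ' − 3π/4) if d ∈ (−2π, −π). Then: (a) φ^{R*} − φ^{T*} ∈ {π/2, 3π/2, −π/2, −3π/2}, so the correlated phase-shift constraint φ^{R*}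 − φ^{T*} ≡ π/2 + νπ (mod 2π) is satisfied for some ν ∈ {0,1}; (b) the phase errors are identical in magnitude, |φ^{R*} − Δ^R| = |φ^{T*} − Δ^T|; and (c) both phase errors satisfy |φ^{R*} − Δ^R| ≤ π/4 and |φ^{T*} − Δ^T| ≤ π/4. -/
open Real

/-- Correctness of the diversity preserving phase-shift configuration,
Table I: with `d = ΔR − ΔT ∈ (−2π, 2π)`, `φ' = (ΔR + ΔT)/2` and the phases `φT, φR`
chosen according to Table I, (a) `φR − φT ∈ {π/2, 3π/2, −π/2, −3π/2}`, so the correlated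
phase-shift constraint `φR − φT = π/2 + νπ (mod 2π)` holds for some `ν ∈ {0,1}`;
(b) the two phase errors have equal magnitude; (c) both phase errors are at most `π/4`. -/
theorem stmt_4 (ΔR ΔT φ' φT φR : ℝ)
    (hd : -(2 * π) < ΔR - ΔT ∧ ΔR - ΔT < 2 * π)
    (hφ' : φ' = (ΔR + ΔT) / 2)
    (hcase :
      (0 ≤ ΔR - ΔT ∧ ΔR - ΔT < π ∧ φT = φ' - π / 4 ∧ φR = φ' + π / 4)
      ∨ (π ≤ ΔR - ΔT ∧ ΔR - ΔT < 2 * π ∧ φT = φ' - 3 * π / 4 ∧ φR = φ' + 3 * π / 4)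
      ∨ (-π ≤ ΔR - ΔT ∧ ΔR - ΔT < 0 ∧ φT = φ' + π / 4 ∧ φR = φ' - π / 4)
      ∨ (-(2 * π) < ΔR - ΔT ∧ ΔR - ΔT < -π ∧ φT = φ' + 3 * π / 4 ∧ φR = φ' - 3 * π / 4)) :
    ((φR - φT = π / 2 ∨ φR - φT = 3 * π / 2 ∨ φR - φT = -(π / 2) ∨ φR - φT = -(3 * π / 2))
      ∧ (∃ (ν : ℕ) (k : ℤ), (ν = 0 ∨ ν = 1) ∧
          φR - φT = π / 2 + (ν : ℝ) * π + 2 * (k : ℝ) * π))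
    ∧ |φR - ΔR| = |φT - ΔT|
    ∧ |φR - ΔR| ≤ π / 4 ∧ |φT - ΔT| ≤ π / 4 := by
  obtain ⟨h1, h2⟩ := hd
  have hπ := Real.pi_pos
  rcases hcase with ⟨ha, hb, hT, hR⟩ | ⟨ha, hb, hT, hR⟩ | ⟨ha, hb, hT, hR⟩ | ⟨ha, hb, hT, hR⟩ <;>
    subst hT hR hφ' <;>
    refine ⟨⟨?_, ?_⟩, ?_, ?_, ?_⟩
  · left; ring
  · exact ⟨0, 0, Or.inl rfl, by push_cast; ring⟩
  · have h : (ΔR + ΔT) / 2 + π / 4 - ΔR = -((ΔR + ΔT) / 2 - π / 4 - ΔT) := by ring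
    rw [h, abs_neg]
  · rw [abs_le]; constructor <;> linarith
  · rw [abs_le]; constructor <;> linarith
  · right; left; ring
  · exact ⟨1, 0, Or.inr rfl, by push_cast; ring⟩
  · have h : (ΔR + ΔT) / 2 + 3 * π / 4 - ΔR = -((ΔR + ΔT) / 2 - 3 * π / 4 - ΔT) := by ring
    rw [h, abs_neg]
  · rw [abs_le]; constructor <;> linarith
  · rw [abs_le]; constructor <;> linarith
  · right; right; left; ring
  · exact ⟨1, -1, Or.inr rfl, by push_cast; ring⟩
  · have h : (ΔR + ΔT) / 2 - π / 4 - ΔR = -((ΔR + ΔT) / 2 + π / 4 - ΔT) := by ring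
    rw [h, abs_neg]
  · rw [abs_le]; constructor <;> linarith
  · rw [abs_le]; constructor <;> linarith
  · right; right; right; ring
  · exact ⟨0, -1, Or.inl rfl, by push_cast; ring⟩
  · have h : (ΔR + ΔT) / 2 - 3 * π / 4 - ΔR = -((ΔR + ΔT) / 2 + 3 * π / 4 - ΔT) := by ring
    rw [h, abs_neg]
  · rw [abs_le]; constructor <;> linarith
  · rw [abs_le]; constructor <;> linarith
end

section
/- (Theorem 3, outage probability upper bound under DP-PSC.) Let (Ω, F, P) be a probability space and Z_0, Z_1, …, Z_M be mutually independent complex-valued random variables such that almost surely Re(Z_p · conj(Z_q)) ≥ 0 for all pairs of indices p, q ∈ {0,1,…,M}. Then for every t > 0, P(|Z_0 + Z_1 + ⋯ + Z_M| < t) ≤ ∏_{m=0}^{M} P(|Z_m| < t). -/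
open MeasureTheory ProbabilityTheory Complex Finset

/-- Theorem 3, outage probability upper bound under DP-PSC: if
`Z 0, …, Z M` are mutually independent complex random variables whose pairwise real
inner products are almost surely nonnegative, then for every `t > 0`,
`P(|Z 0 + ⋯ + Z M| < t) ≤ ∏ m, P(|Z m| < t)`. -/
theorem stmt_7 {Ω : Type*} [MeasurableSpace Ω] (μ : Measure Ω) [IsProbabilityMeasure μ]
    (M : ℕ) (Z : Fin (M + 1) → Ω → ℂ)
    (hmeas : ∀ m, Measurable (Z m))
    (hindep : iIndepFun Z μ)
    (hpos : ∀ᵐ ω ∂μ, ∀ p q : Fin (M + 1), 0 ≤ (Z p ω * (starRingEnd ℂ) (Z q ω)).re) :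
    ∀ t : ℝ, 0 < t →
      μ {ω | ‖∑ m, Z m ω‖ < t} ≤ ∏ m, μ {ω | ‖Z m ω‖ < t} := by
  intro t ht
  set s : Fin (M + 1) → Set Ω := fun m => Z m ⁻¹' {z | ‖z‖ < t} with hs
  have hprod : μ (⋂ m, s m) = ∏ m, μ (s m) := by
    refine hindep.meas_iInter fun i => ?_
    exact ⟨{z | ‖z‖ < t}, measurableSet_lt continuous_norm.measurable measurable_const, rfl⟩
  have hsub : ∀ᵐ ω ∂μ, ω ∈ {ω | ‖∑ m, Z m ω‖ < t} → ω ∈ ⋂ m, s m := by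
    filter_upwards [hpos] with ω hω habs
    refine Set.mem_iInter.2 fun m => ?_
    have expand : Complex.normSq (∑ k, Z k ω) =
        ∑ p, ∑ q, (Z p ω * (starRingEnd ℂ) (Z q ω)).re := by
      have h1 : (Complex.normSq (∑ k, Z k ω) : ℝ) =
          ((∑ k, Z k ω) * (starRingEnd ℂ) (∑ k, Z k ω)).re := by
        rw [Complex.mul_conj]; simp
      rw [h1, map_sum, Finset.sum_mul_sum, Complex.re_sum]
      exact Finset.sum_congr rfl fun p _ => by rw [Complex.re_sum]
    have hsq : Complex.normSq (Z m ω) ≤ Complex.normSq (∑ k, Z k ω) := by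
      rw [expand]
      have hm : Complex.normSq (Z m ω) = (Z m ω * (starRingEnd ℂ) (Z m ω)).re := by
        rw [Complex.mul_conj]; simp
      rw [hm]
      calc (Z m ω * (starRingEnd ℂ) (Z m ω)).re
          ≤ ∑ q, (Z m ω * (starRingEnd ℂ) (Z q ω)).re :=
            Finset.single_le_sum (fun q _ => hω m q) (Finset.mem_univ m)
        _ ≤ ∑ p, ∑ q, (Z p ω * (starRingEnd ℂ) (Z q ω)).re :=
            Finset.single_le_sum
              (fun p _ => Finset.sum_nonneg fun q _ => hω p q) (Finset.mem_univ m)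
    have hle : ‖Z m ω‖ ≤ ‖∑ k, Z k ω‖ := by
      rw [Complex.norm_def, Complex.norm_def]
      exact Real.sqrt_le_sqrt hsq
    exact lt_of_le_of_lt hle habs
  calc μ {ω | ‖∑ m, Z m ω‖ < t} ≤ μ (⋂ m, s m) := measure_mono_ae hsub
    _ = ∏ m, μ (s m) := hprod
    _ = ∏ m, μ {ω | ‖Z m ω‖ < t} := rfl
end
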